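/- For every integer r ≥ 2, the function g_r : [0,1] → ℝ defined by g_r(x) = ∫ tanh( s_r(x) + √(s_r(x))·z ) dγ(z), where s_r(x) = ( (1+x)^{r−1} − (1−x)^{r−1} ) / (2(r−1)) and γ is the standard Gaussian measure on ℝ, is strictly increasing and continuously differentiable on [0,1]. -/

import Mathlib

open ProbabilityTheory MeasureTheory

/-- `s_r(x) = ((1+x)^{r−1} − (1−x)^{r−1}) / (2(r−1))`. -/
noncomputable def s (r : ℕ) (x : ℝ) : ℝ :=
  ((1 + x) ^ (r - 1) - (1 - x) ^ (r - 1)) / (2 * ((r : ℝ) - 1))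

/-- `g_r(x) = ∫ tanh(s_r(x) + √(s_r(x))·z) dγ(z)`, `γ` the standard Gaussian. -/
noncomputable def g (r : ℕ) (x : ℝ) : ℝ :=
  ∫ z, Real.tanh (s r x + Real.sqrt (s r x) * z) ∂(gaussianReal 0 1)

namespace Stmt12A

open Real Filter Set Topology
open scoped ENNReal NNReal

lemma tanh_lt_one (x : ℝ) : Real.tanh x < 1 := by
  rw [Real.tanh_eq_sinh_div_cosh, div_lt_one (Real.cosh_pos x)]
  exact Real.sinh_lt_cosh x

lemma neg_one_lt_tanh (x : ℝ) : -1 < Real.tanh x := by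
  have h := tanh_lt_one (-x)
  rw [Real.tanh_neg] at h; linarith

lemma abs_tanh_le_one (x : ℝ) : |Real.tanh x| ≤ 1 := by
  rw [abs_le]
  exact ⟨(neg_one_lt_tanh x).le, (tanh_lt_one x).le⟩

lemma tanh_eq : Real.tanh = fun x => Real.sinh x / Real.cosh x :=
  funext fun x => Real.tanh_eq_sinh_div_cosh x

lemma continuous_tanh : Continuous Real.tanh := by
  rw [tanh_eq]
  exact Real.continuous_sinh.div Real.continuous_cosh fun x => (Real.cosh_pos x).ne'

lemma hasDerivAt_tanh (x : ℝ) : HasDerivAt Real.tanh (1 - Real.tanh x ^ 2) x := by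
  have h : HasDerivAt (fun x => Real.sinh x / Real.cosh x)
      ((Real.cosh x * Real.cosh x - Real.sinh x * Real.sinh x) / Real.cosh x ^ 2) x :=
    (Real.hasDerivAt_sinh x).div (Real.hasDerivAt_cosh x) (Real.cosh_pos x).ne'
  rw [tanh_eq]
  convert h using 1
  have h2 : Real.cosh x ^ 2 - Real.sinh x ^ 2 = 1 := Real.cosh_sq_sub_sinh_sq x
  have h3 := (Real.cosh_pos x).ne'
  show 1 - (Real.sinh x / Real.cosh x) ^ 2 = _
  field_simp

lemma pdf_def (z : ℝ) :
    gaussianPDFReal 0 1 z = (Real.sqrt (2 * Real.pi))⁻¹ * Real.exp (-z ^ 2 / 2) := by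
  simp [gaussianPDFReal]

lemma continuous_pdf : Continuous (gaussianPDFReal 0 1) := by
  have : gaussianPDFReal 0 1 = fun z => (Real.sqrt (2 * Real.pi))⁻¹ * Real.exp (-z ^ 2 / 2) :=
    funext pdf_def
  rw [this]
  fun_prop

lemma integral_gaussian_eq (f : ℝ → ℝ) :
    ∫ z, f z ∂(gaussianReal 0 1) = ∫ z, gaussianPDFReal 0 1 z * f z := by
  rw [gaussianReal_of_var_ne_zero 0 one_ne_zero]
  have h : (gaussianPDF 0 1) = fun x => ((Real.toNNReal (gaussianPDFReal 0 1 x) : ℝ≥0) : ℝ≥0∞) := by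
    funext x
    rw [gaussianPDF, ENNReal.ofReal]
  rw [h, integral_withDensity_eq_integral_smul (measurable_gaussianPDFReal 0 1).real_toNNReal f]
  congr 1
  funext z
  rw [NNReal.smul_def, Real.coe_toNNReal _ (gaussianPDFReal_nonneg 0 1 z), smul_eq_mul]

lemma integrable_gaussian_iff {f : ℝ → ℝ} :
    Integrable f (gaussianReal 0 1) ↔
      Integrable (fun z => gaussianPDFReal 0 1 z * f z) := by
  rw [gaussianReal_of_var_ne_zero 0 one_ne_zero,
    integrable_withDensity_iff (measurable_gaussianPDF 0 1)
      (ae_of_all _ fun z => ENNReal.ofReal_lt_top)]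
  have h : (fun x => f x * (gaussianPDF 0 1 x).toReal)
      = fun z => gaussianPDFReal 0 1 z * f z := by
    funext z
    rw [gaussianPDF, ENNReal.toReal_ofReal (gaussianPDFReal_nonneg 0 1 z), mul_comm]
  rw [h]

lemma integrable_bdd_cont {f : ℝ → ℝ} (hc : Continuous f) {C : ℝ} (h : ∀ z, |f z| ≤ C) :
    Integrable f (gaussianReal 0 1) :=
  Integrable.mono' (integrable_const C) hc.aestronglyMeasurable
    (ae_of_all _ fun z => by simpa using h z)

lemma integrable_id_gaussian : Integrable (fun z => z) (gaussianReal 0 1) := by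
  rw [integrable_gaussian_iff]
  have h : Integrable (fun z : ℝ => (Real.sqrt (2 * Real.pi))⁻¹ * (z * Real.exp (-(1/2) * z ^ 2))) :=
    (integrable_mul_exp_neg_mul_sq (by norm_num : (0:ℝ) < 1/2)).const_mul _
  refine h.congr (ae_of_all _ fun z => ?_)
  show (Real.sqrt (2 * Real.pi))⁻¹ * (z * Real.exp (-(1/2) * z ^ 2)) = gaussianPDFReal 0 1 z * z
  rw [pdf_def, show -(1/2 : ℝ) * z ^ 2 = -z ^ 2 / 2 by ring]
  ring

lemma integrable_abs_gaussian : Integrable (fun z : ℝ => |z|) (gaussianReal 0 1) :=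
  integrable_id_gaussian.abs

lemma hasDerivAt_pdf (z : ℝ) :
    HasDerivAt (gaussianPDFReal 0 1) (-z * gaussianPDFReal 0 1 z) z := by
  have h : HasDerivAt (fun z : ℝ => (Real.sqrt (2 * Real.pi))⁻¹ * Real.exp (-z ^ 2 / 2))
      ((Real.sqrt (2 * Real.pi))⁻¹ * (Real.exp (-z ^ 2 / 2) * (-(↑2 * z ^ (2 - 1)) / 2))) z := by
    exact (((hasDerivAt_pow 2 z).neg.div_const 2).exp.const_mul _)
  have e : gaussianPDFReal 0 1 = fun z => (Real.sqrt (2 * Real.pi))⁻¹ * Real.exp (-z ^ 2 / 2) :=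
    funext pdf_def
  rw [e]
  convert h using 1
  show -z * ((Real.sqrt (2 * Real.pi))⁻¹ * Real.exp (-z ^ 2 / 2)) = _
  norm_num
  ring

lemma tendsto_sq_atTop_atBot : Tendsto (fun z : ℝ => -z ^ 2 / 2) atTop atBot := by
  apply Tendsto.atBot_div_const (by norm_num : (0:ℝ) < 2)
  exact tendsto_neg_atTop_atBot.comp (tendsto_pow_atTop two_ne_zero)

lemma tendsto_sq_atBot_atBot : Tendsto (fun z : ℝ => -z ^ 2 / 2) atBot atBot := by
  apply Tendsto.atBot_div_const (by norm_num : (0:ℝ) < 2)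
  have h : Tendsto (fun z : ℝ => z ^ 2) atBot atTop := by
    have := (tendsto_pow_atTop (n:=2) (by norm_num)).comp (tendsto_abs_atBot_atTop (G := ℝ))
    simpa [Function.comp_def, sq_abs] using this
  exact tendsto_neg_atTop_atBot.comp h

lemma tendsto_pdf_atTop : Tendsto (gaussianPDFReal 0 1) atTop (𝓝 0) := by
  have e : gaussianPDFReal 0 1 = fun z => (Real.sqrt (2 * Real.pi))⁻¹ * Real.exp (-z ^ 2 / 2) :=
    funext pdf_def
  rw [e]
  have := (Real.tendsto_exp_atBot.comp tendsto_sq_atTop_atBot).const_mul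
    ((Real.sqrt (2 * Real.pi))⁻¹ : ℝ)
  simpa using this

lemma tendsto_pdf_atBot : Tendsto (gaussianPDFReal 0 1) atBot (𝓝 0) := by
  have e : gaussianPDFReal 0 1 = fun z => (Real.sqrt (2 * Real.pi))⁻¹ * Real.exp (-z ^ 2 / 2) :=
    funext pdf_def
  rw [e]
  have := (Real.tendsto_exp_atBot.comp tendsto_sq_atBot_atBot).const_mul
    ((Real.sqrt (2 * Real.pi))⁻¹ : ℝ)
  simpa using this

lemma stein (G G' : ℝ → ℝ) (hd : ∀ z, HasDerivAt G (G' z) z) (hc' : Continuous G')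
    {C0 C1 : ℝ} (hG : ∀ z, |G z| ≤ C0) (hG' : ∀ z, |G' z| ≤ C1) :
    ∫ z, z * G z ∂(gaussianReal 0 1) = ∫ z, G' z ∂(gaussianReal 0 1) := by
  set φ := gaussianPDFReal 0 1 with hφ
  have hφc : Continuous φ := continuous_pdf
  have hφnn : ∀ z, 0 ≤ φ z := fun z => gaussianPDFReal_nonneg 0 1 z
  have hGc : Continuous G := continuous_iff_continuousAt.2 fun z => (hd z).continuousAt
  have hC0 : 0 ≤ C0 := le_trans (abs_nonneg _) (hG 0)
  -- derivative of H z = G z * φ z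
  have hderiv : ∀ z, HasDerivAt (fun z => G z * φ z) ((G' z - z * G z) * φ z) z := by
    intro z
    have := (hd z).mul (hasDerivAt_pdf z)
    refine this.congr_deriv ?_
    rw [hφ]; ring
  -- integrability of the derivative
  have hint : Integrable (fun z => (G' z - z * G z) * φ z) := by
    have hb : Integrable (fun z => C1 * φ z + C0 * (|z| * φ z)) := by
      refine Integrable.add ((integrable_gaussianPDFReal 0 1).const_mul C1) ?_
      exact (integrable_gaussian_iff.mp integrable_abs_gaussian).congr
        (ae_of_all _ fun z => by ring_nf; rw [mul_comm]) |>.const_mul C0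
    refine hb.mono' ?_ (ae_of_all _ fun z => ?_)
    · exact (((hc'.sub (continuous_id.mul hGc)).mul hφc)).aestronglyMeasurable
    · have h1 : |G' z - z * G z| ≤ C1 + C0 * |z| := by
        calc |G' z - z * G z| ≤ |G' z| + |z * G z| := abs_sub _ _
        _ ≤ C1 + C0 * |z| := by
            rw [abs_mul]
            have := mul_le_mul_of_nonneg_left (hG z) (abs_nonneg z)
            nlinarith [hG' z]
      calc ‖(G' z - z * G z) * φ z‖ = |G' z - z * G z| * φ z := by
            rw [Real.norm_eq_abs, abs_mul, abs_of_nonneg (hφnn z)]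
      _ ≤ (C1 + C0 * |z|) * φ z := by
            exact mul_le_mul_of_nonneg_right h1 (hφnn z)
      _ = C1 * φ z + C0 * (|z| * φ z) := by ring
  -- limits at infinity
  have hbdd : ∀ z, ‖G z * φ z‖ ≤ C0 * φ z := by
    intro z
    rw [Real.norm_eq_abs, abs_mul, abs_of_nonneg (hφnn z)]
    exact mul_le_mul_of_nonneg_right (hG z) (hφnn z)
  have htop : Tendsto (fun z => G z * φ z) atTop (𝓝 0) := by
    apply squeeze_zero_norm hbdd
    simpa using tendsto_pdf_atTop.const_mul C0
  have hbot : Tendsto (fun z => G z * φ z) atBot (𝓝 0) := by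
    apply squeeze_zero_norm hbdd
    simpa using tendsto_pdf_atBot.const_mul C0
  have key : ∫ z, (G' z - z * G z) * φ z = 0 - 0 :=
    integral_of_hasDerivAt_of_tendsto hderiv hint hbot htop
  rw [sub_zero] at key
  -- transfer to gaussian measure
  rw [integral_gaussian_eq, integral_gaussian_eq]
  have e1 : Integrable (fun z => φ z * G' z) := by
    refine integrable_gaussian_iff.mp (integrable_bdd_cont hc' hG')
  have e2 : Integrable (fun z => φ z * (z * G z)) := by
    refine integrable_gaussian_iff.mp ?_
    refine Integrable.mono' (integrable_abs_gaussian.const_mul C0)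
      ((continuous_id.mul hGc)).aestronglyMeasurable (ae_of_all _ fun z => ?_)
    rw [Real.norm_eq_abs, abs_mul]
    exact mul_le_mul_of_nonneg_left (hG z) (abs_nonneg z) |>.trans
      (le_of_eq (mul_comm _ _))
  have key2 : ∫ z, (φ z * G' z - φ z * (z * G z)) = 0 := by
    rw [← key]
    congr 1
    funext z
    ring
  rw [integral_sub e1 e2] at key2
  linarith

noncomputable def F (μ : ℝ) : ℝ := ∫ z, Real.tanh (μ + Real.sqrt μ * z) ∂(gaussianReal 0 1)

noncomputable def DF (μ : ℝ) : ℝ :=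
  ∫ z, (1 - Real.tanh (μ + Real.sqrt μ * z) ^ 2) * (1 - Real.tanh (μ + Real.sqrt μ * z))
    ∂(gaussianReal 0 1)

lemma cont_z (μ : ℝ) : Continuous (fun z : ℝ => Real.tanh (μ + Real.sqrt μ * z)) :=
  continuous_tanh.comp (continuous_const.add (continuous_const.mul continuous_id))

lemma cont_mu (z : ℝ) : Continuous (fun μ : ℝ => Real.tanh (μ + Real.sqrt μ * z)) :=
  continuous_tanh.comp (continuous_id.add (Real.continuous_sqrt.mul continuous_const))

lemma continuous_F : Continuous F := by
  rw [continuous_iff_continuousAt]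
  intro μ0
  apply continuousAt_of_dominated (bound := fun _ => (1:ℝ))
  · exact Eventually.of_forall fun μ => (cont_z μ).aestronglyMeasurable
  · exact Eventually.of_forall fun μ => ae_of_all _ fun z => by
      simpa using abs_tanh_le_one (μ + Real.sqrt μ * z)
  · exact integrable_const 1
  · exact ae_of_all _ fun z => (cont_mu z).continuousAt

lemma DF_integrand_bound (t : ℝ) (h1 : -1 < t) (h2 : t < 1) :
    |(1 - t ^ 2) * (1 - t)| ≤ 2 := by
  rw [abs_mul, abs_of_nonneg (by nlinarith : (0:ℝ) ≤ 1 - t ^ 2),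
    abs_of_nonneg (by linarith : (0:ℝ) ≤ 1 - t)]
  nlinarith

lemma continuous_DF : Continuous DF := by
  rw [continuous_iff_continuousAt]
  intro μ0
  apply continuousAt_of_dominated (bound := fun _ => (2:ℝ))
  · exact Eventually.of_forall fun μ =>
      (((continuous_const.sub ((cont_z μ).pow 2)).mul
        (continuous_const.sub (cont_z μ)))).aestronglyMeasurable
  · exact Eventually.of_forall fun μ => ae_of_all _ fun z => by
      rw [Real.norm_eq_abs]
      exact DF_integrand_bound _ (neg_one_lt_tanh _) (tanh_lt_one _)
  · exact integrable_const 2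
  · exact ae_of_all _ fun z => by
      exact (((continuous_const.sub ((cont_mu z).pow 2)).mul
        (continuous_const.sub (cont_mu z)))).continuousAt

lemma hasDerivAt_F {μ : ℝ} (hμ : 0 < μ) :
    HasDerivAt F
      (∫ z, (1 - Real.tanh (μ + Real.sqrt μ * z) ^ 2) * (1 + 1 / (2 * Real.sqrt μ) * z)
        ∂(gaussianReal 0 1)) μ := by
  have h2 : (0:ℝ) < μ / 2 := by linarith
  have hsq : 0 < Real.sqrt (μ / 2) := Real.sqrt_pos.2 h2
  refine (hasDerivAt_integral_of_dominated_loc_of_deriv_le (Metric.ball_mem_nhds μ h2)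
    (F' := fun x z => (1 - Real.tanh (x + Real.sqrt x * z) ^ 2) * (1 + 1 / (2 * Real.sqrt x) * z))
    (bound := fun z => 1 + (2 * Real.sqrt (μ / 2))⁻¹ * |z|)
    (Eventually.of_forall fun x => (cont_z x).aestronglyMeasurable)
    (integrable_bdd_cont (cont_z μ) fun z => abs_tanh_le_one _)
    ?_ ?_ ?_ ?_).2
  · exact (((continuous_const.sub ((cont_z μ).pow 2)).mul
      (continuous_const.add (continuous_const.mul continuous_id)))).aestronglyMeasurable
  · refine ae_of_all _ fun z x hx => ?_
    have hxpos : μ / 2 < x := by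
      rw [Metric.mem_ball, Real.dist_eq, abs_lt] at hx
      linarith
    have hsx : Real.sqrt (μ / 2) ≤ Real.sqrt x := Real.sqrt_le_sqrt (by linarith)
    have hsxpos : 0 < Real.sqrt x := lt_of_lt_of_le hsq hsx
    have h1 : |1 - Real.tanh (x + Real.sqrt x * z) ^ 2| ≤ 1 := by
      have := abs_tanh_le_one (x + Real.sqrt x * z)
      rw [abs_le] at this ⊢
      constructor <;> nlinarith [this.1, this.2]
    rw [Real.norm_eq_abs, abs_mul]
    have h3 : |1 + 1 / (2 * Real.sqrt x) * z| ≤ 1 + (2 * Real.sqrt (μ / 2))⁻¹ * |z| := by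
      calc |1 + 1 / (2 * Real.sqrt x) * z| ≤ 1 + |1 / (2 * Real.sqrt x) * z| := by
            have := abs_add_le (1:ℝ) (1 / (2 * Real.sqrt x) * z)
            simpa using this
      _ ≤ 1 + (2 * Real.sqrt (μ / 2))⁻¹ * |z| := by
            rw [abs_mul]
            have e1 : |1 / (2 * Real.sqrt x)| = (2 * Real.sqrt x)⁻¹ := by
              rw [abs_div, abs_of_nonneg (by positivity : (0:ℝ) ≤ 2 * Real.sqrt x)]
              simp
            rw [e1]
            have e2 : (2 * Real.sqrt x)⁻¹ ≤ (2 * Real.sqrt (μ / 2))⁻¹ := by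
              apply inv_anti₀ (by positivity)
              linarith
            have := mul_le_mul_of_nonneg_right e2 (abs_nonneg z)
            linarith
    calc |1 - Real.tanh (x + Real.sqrt x * z) ^ 2| * |1 + 1 / (2 * Real.sqrt x) * z|
        ≤ 1 * (1 + (2 * Real.sqrt (μ / 2))⁻¹ * |z|) := by
          apply mul_le_mul h1 h3 (abs_nonneg _)
          positivity
    _ = 1 + (2 * Real.sqrt (μ / 2))⁻¹ * |z| := one_mul _
  · exact (integrable_const 1).add (integrable_abs_gaussian.const_mul _)
  · refine ae_of_all _ fun z x hx => ?_
    have hxpos : 0 < x := by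
      rw [Metric.mem_ball, Real.dist_eq, abs_lt] at hx
      linarith
    have hin : HasDerivAt (fun x : ℝ => x + Real.sqrt x * z) (1 + 1 / (2 * Real.sqrt x) * z) x :=
      (hasDerivAt_id x).add ((Real.hasDerivAt_sqrt hxpos.ne').mul_const z)
    have := (hasDerivAt_tanh (x + Real.sqrt x * z)).comp x hin
    exact this

lemma abs_one_sub_tanh_sq_le_one (u : ℝ) : |1 - Real.tanh u ^ 2| ≤ 1 := by
  have h := abs_tanh_le_one u
  rw [abs_le] at h ⊢
  constructor <;> nlinarith [h.1, h.2]

lemma hasDerivAt_F' {μ : ℝ} (hμ : 0 < μ) : HasDerivAt F (DF μ) μ := by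
  have hsμ : 0 < Real.sqrt μ := Real.sqrt_pos.2 hμ
  have h := hasDerivAt_F hμ
  have key :
      (∫ z, (1 - Real.tanh (μ + Real.sqrt μ * z) ^ 2) * (1 + 1 / (2 * Real.sqrt μ) * z)
        ∂(gaussianReal 0 1)) = DF μ := by
    set T : ℝ → ℝ := fun z => Real.tanh (μ + Real.sqrt μ * z) with hT
    have hTc : Continuous T := cont_z μ
    -- derivative of A z = 1 - T z ^ 2 in z
    have hinner : ∀ z : ℝ, HasDerivAt (fun z : ℝ => μ + Real.sqrt μ * z) (Real.sqrt μ) z := by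
      intro z
      simpa using ((hasDerivAt_id z).const_mul (Real.sqrt μ)).const_add μ
    have hA : ∀ z : ℝ, HasDerivAt (fun z => 1 - T z ^ 2)
        (-(2 * T z * ((1 - T z ^ 2) * Real.sqrt μ))) z := by
      intro z
      have h1 : HasDerivAt T ((1 - T z ^ 2) * Real.sqrt μ) z := by
        have := (hasDerivAt_tanh (μ + Real.sqrt μ * z)).comp z (hinner z); exact this
      have h2 : HasDerivAt (fun z => T z ^ 2) (2 * T z ^ 1 * ((1 - T z ^ 2) * Real.sqrt μ)) z := by
        simpa using h1.fun_pow 2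
      have h3 := h2.const_sub 1
      refine h3.congr_deriv ?_
      ring
    have hA'c : Continuous fun z => -(2 * T z * ((1 - T z ^ 2) * Real.sqrt μ)) := by
      fun_prop
    have hsteinA := stein (fun z => 1 - T z ^ 2)
      (fun z => -(2 * T z * ((1 - T z ^ 2) * Real.sqrt μ))) hA hA'c
      (C0 := 1) (C1 := 2 * Real.sqrt μ)
      (fun z => abs_one_sub_tanh_sq_le_one _)
      (fun z => by
        have h1 := abs_tanh_le_one (μ + Real.sqrt μ * z)
        have h2 := abs_one_sub_tanh_sq_le_one (μ + Real.sqrt μ * z)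
        rw [abs_neg, abs_mul, abs_mul, abs_mul]
        rw [abs_of_nonneg hsμ.le, abs_of_nonneg (by norm_num : (0:ℝ) ≤ 2)]
        calc 2 * |T z| * (|1 - T z ^ 2| * Real.sqrt μ)
            ≤ 2 * 1 * (1 * Real.sqrt μ) := by
              apply mul_le_mul
              · nlinarith [abs_nonneg (T z)]
              · apply mul_le_mul_of_nonneg_right h2 hsμ.le |>.trans
                simp
              · positivity
              · norm_num
        _ = 2 * Real.sqrt μ := by ring)
    -- integrabilities
    have iA : Integrable (fun z => 1 - T z ^ 2) (gaussianReal 0 1) :=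
      integrable_bdd_cont (by fun_prop) (fun z => abs_one_sub_tanh_sq_le_one _)
    have izA : Integrable (fun z => z * (1 - T z ^ 2)) (gaussianReal 0 1) := by
      refine Integrable.mono' (integrable_abs_gaussian)
        (by fun_prop : Continuous fun z => z * (1 - T z ^ 2)).aestronglyMeasurable
        (ae_of_all _ fun z => ?_)
      rw [Real.norm_eq_abs, abs_mul]
      have := mul_le_mul_of_nonneg_left (abs_one_sub_tanh_sq_le_one (μ + Real.sqrt μ * z))
        (abs_nonneg z)
      simpa using this
    have iTA : Integrable (fun z => T z * (1 - T z ^ 2)) (gaussianReal 0 1) := by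
      refine integrable_bdd_cont (by fun_prop) (C := 1) fun z => ?_
      rw [abs_mul]
      have h1 := abs_tanh_le_one (μ + Real.sqrt μ * z)
      have h2 := abs_one_sub_tanh_sq_le_one (μ + Real.sqrt μ * z)
      nlinarith [abs_nonneg (T z), abs_nonneg (1 - T z ^ 2)]
    -- expand the integrand
    have expand : (fun z => (1 - T z ^ 2) * (1 + 1 / (2 * Real.sqrt μ) * z))
        = fun z => (1 - T z ^ 2) + 1 / (2 * Real.sqrt μ) * (z * (1 - T z ^ 2)) := by
      funext z
      ring
    rw [expand, integral_add iA (izA.const_mul _), integral_const_mul]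
    rw [hsteinA]
    have collapse : ∀ z : ℝ, 1 / (2 * Real.sqrt μ) * -(2 * T z * ((1 - T z ^ 2) * Real.sqrt μ))
        = -(T z * (1 - T z ^ 2)) := by
      intro z
      field_simp
    rw [← integral_const_mul]
    have e2 : (fun z => 1 / (2 * Real.sqrt μ) * -(2 * T z * ((1 - T z ^ 2) * Real.sqrt μ)))
        = fun z => -(T z * (1 - T z ^ 2)) := funext collapse
    rw [e2]
    rw [integral_neg, ← sub_eq_add_neg, ← integral_sub iA iTA]
    apply integral_congr_ae
    refine ae_of_all _ fun z => ?_
    show (1 - T z ^ 2) - T z * (1 - T z ^ 2) = (1 - T z ^ 2) * (1 - T z)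
    ring
  rw [key] at h
  exact h

lemma DF_pos (μ : ℝ) : 0 < DF μ := by
  have hpos : ∀ z : ℝ, 0 < (1 - Real.tanh (μ + Real.sqrt μ * z) ^ 2)
      * (1 - Real.tanh (μ + Real.sqrt μ * z)) := by
    intro z
    have h1 := tanh_lt_one (μ + Real.sqrt μ * z)
    have h2 := neg_one_lt_tanh (μ + Real.sqrt μ * z)
    apply mul_pos
    · nlinarith
    · linarith
  have hi : Integrable (fun z => (1 - Real.tanh (μ + Real.sqrt μ * z) ^ 2)
      * (1 - Real.tanh (μ + Real.sqrt μ * z))) (gaussianReal 0 1) := by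
    refine integrable_bdd_cont ((continuous_const.sub ((cont_z μ).pow 2)).mul
      (continuous_const.sub (cont_z μ))) (C := 2) fun z => ?_
    rw [abs_mul]
    have h1 := abs_one_sub_tanh_sq_le_one (μ + Real.sqrt μ * z)
    have h2 := abs_tanh_le_one (μ + Real.sqrt μ * z)
    have h3 : |1 - Real.tanh (μ + Real.sqrt μ * z)| ≤ 2 := by
      rw [abs_le] at h2 ⊢
      constructor <;> linarith [h2.1, h2.2]
    nlinarith [abs_nonneg (1 - Real.tanh (μ + Real.sqrt μ * z) ^ 2),
      abs_nonneg (1 - Real.tanh (μ + Real.sqrt μ * z))]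
  rw [DF, integral_pos_iff_support_of_nonneg_ae (ae_of_all _ fun z => (hpos z).le) hi]
  have hs : Function.support (fun z => (1 - Real.tanh (μ + Real.sqrt μ * z) ^ 2)
      * (1 - Real.tanh (μ + Real.sqrt μ * z))) = Set.univ :=
    Set.eq_univ_of_forall fun z => (hpos z).ne'
  rw [hs]
  simp

lemma hasDerivWithinAt_F {μ : ℝ} (hμ : 0 ≤ μ) :
    HasDerivWithinAt F (DF μ) (Set.Ici 0) μ := by
  rcases hμ.lt_or_eq with h | h
  · exact (hasDerivAt_F' h).hasDerivWithinAt
  · rw [← h]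
    refine hasDerivWithinAt_Ici_of_tendsto_deriv (s := Set.Ioi (0:ℝ)) ?_ ?_ ?_ ?_
    · exact fun x hx => (hasDerivAt_F' hx).differentiableAt.differentiableWithinAt
    · exact continuous_F.continuousWithinAt
    · exact self_mem_nhdsWithin
    · have h1 : Tendsto DF (𝓝[>] (0:ℝ)) (𝓝 (DF 0)) :=
        (continuous_DF.tendsto 0).mono_left nhdsWithin_le_nhds
      refine h1.congr' ?_
      filter_upwards [self_mem_nhdsWithin] with x hx
      exact ((hasDerivAt_F' hx).deriv).symm

lemma strictMonoOn_F (M : ℝ) : StrictMonoOn F (Set.Icc 0 M) := by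
  apply strictMonoOn_of_deriv_pos (convex_Icc 0 M) continuous_F.continuousOn
  intro x hx
  rw [interior_Icc] at hx
  rw [(hasDerivAt_F' hx.1).deriv]
  exact DF_pos x

noncomputable def sd (r : ℕ) (x : ℝ) : ℝ := ((1 + x) ^ (r - 2) + (1 - x) ^ (r - 2)) / 2

lemma continuous_sd (r : ℕ) : Continuous (sd r) := by
  unfold sd
  fun_prop

lemma hasDerivAt_s (r : ℕ) (hr : 2 ≤ r) (x : ℝ) : HasDerivAt (s r) (sd r x) x := by
  have hcast : ((r - 1 : ℕ) : ℝ) = (r : ℝ) - 1 := by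
    have : (1 : ℕ) ≤ r := by omega
    push_cast [Nat.cast_sub this]
    ring
  have hr1 : (1:ℝ) ≤ (r:ℝ) - 1 := by
    have : (2:ℝ) ≤ (r:ℝ) := by exact_mod_cast hr
    linarith
  have h1 : HasDerivAt (fun x : ℝ => (1 + x) ^ (r - 1))
      (((r - 1 : ℕ) : ℝ) * (1 + x) ^ (r - 1 - 1) * 1) x :=
    HasDerivAt.pow ((hasDerivAt_id x).const_add 1) _
  have h2 : HasDerivAt (fun x : ℝ => (1 - x) ^ (r - 1))
      (((r - 1 : ℕ) : ℝ) * (1 - x) ^ (r - 1 - 1) * (-1)) x := by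
    have hi : HasDerivAt (fun x : ℝ => 1 - x) (-1) x := by
      simpa using (hasDerivAt_id x).const_sub 1
    exact HasDerivAt.pow hi _
  have h3 := (h1.sub h2).div_const (2 * ((r : ℝ) - 1))
  have e : r - 1 - 1 = r - 2 := by omega
  rw [e, hcast] at h3
  refine h3.congr_deriv ?_
  unfold sd
  have hne : (r : ℝ) - 1 ≠ 0 := by linarith
  field_simp
  ring

lemma sd_pos (r : ℕ) {x : ℝ} (hx : x ∈ Set.Icc (0:ℝ) 1) : 0 < sd r x := by
  obtain ⟨h0, h1⟩ := hx
  have e1 : (1:ℝ) ≤ (1 + x) ^ (r - 2) := one_le_pow₀ (by linarith)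
  have e2 : (0:ℝ) ≤ (1 - x) ^ (r - 2) := pow_nonneg (by linarith) _
  unfold sd
  linarith

lemma s_nonneg (r : ℕ) (hr : 2 ≤ r) {x : ℝ} (hx : x ∈ Set.Icc (0:ℝ) 1) : 0 ≤ s r x := by
  obtain ⟨h0, h1⟩ := hx
  have hr1 : (1:ℝ) ≤ (r:ℝ) - 1 := by
    have : (2:ℝ) ≤ (r:ℝ) := by exact_mod_cast hr
    linarith
  apply div_nonneg
  · have := pow_le_pow_left₀ (by linarith : (0:ℝ) ≤ 1 - x) (by linarith : (1:ℝ) - x ≤ 1 + x) (r - 1)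
    linarith
  · linarith

lemma continuous_s (r : ℕ) (hr : 2 ≤ r) : Continuous (s r) :=
  continuous_iff_continuousAt.2 fun x => (hasDerivAt_s r hr x).continuousAt

lemma strictMonoOn_s (r : ℕ) (hr : 2 ≤ r) : StrictMonoOn (s r) (Set.Icc 0 1) := by
  apply strictMonoOn_of_deriv_pos (convex_Icc 0 1) (continuous_s r hr).continuousOn
  intro x hx
  rw [interior_Icc] at hx
  rw [(hasDerivAt_s r hr x).deriv]
  exact sd_pos r ⟨hx.1.le, hx.2.le⟩

lemma mapsTo_s (r : ℕ) (hr : 2 ≤ r) :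
    Set.MapsTo (s r) (Set.Icc 0 1) (Set.Icc 0 (s r 1)) := by
  intro x hx
  refine ⟨s_nonneg r hr hx, ?_⟩
  exact (strictMonoOn_s r hr).monotoneOn hx (Set.right_mem_Icc.2 zero_le_one) hx.2

end Stmt12A

open Stmt12A in
/-- Lemma F.2: for every integer `r ≥ 2`, `g_r` is strictly increasing and continuously
differentiable on `[0,1]`. -/
theorem stmt12 (r : ℕ) (hr : 2 ≤ r) :
    StrictMonoOn (g r) (Set.Icc 0 1) ∧ ContDiffOn ℝ 1 (g r) (Set.Icc 0 1) := by
  have hge : g r = F ∘ s r := rfl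
  constructor
  · rw [hge]
    exact (strictMonoOn_F (s r 1)).comp (strictMonoOn_s r hr) (mapsTo_s r hr)
  · have hd : ∀ x ∈ Set.Icc (0:ℝ) 1,
        HasDerivWithinAt (g r) (DF (s r x) * sd r x) (Set.Icc 0 1) x := by
      intro x hx
      rw [hge]
      refine HasDerivWithinAt.comp x (hasDerivWithinAt_F (s_nonneg r hr hx))
        ((hasDerivAt_s r hr x).hasDerivWithinAt) ?_
      intro y hy
      exact s_nonneg r hr hy
    have hu : UniqueDiffOn ℝ (Set.Icc (0:ℝ) 1) := uniqueDiffOn_Icc one_pos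
    rw [show (1 : WithTop ℕ∞) = 0 + 1 by norm_num, contDiffOn_succ_iff_derivWithin hu]
    refine ⟨fun x hx => ((hd x hx).differentiableWithinAt), ?_, ?_⟩
    · intro h
      simp at h
    · rw [contDiffOn_zero]
      have he : ∀ x ∈ Set.Icc (0:ℝ) 1,
          derivWithin (g r) (Set.Icc 0 1) x = DF (s r x) * sd r x := by
        intro x hx
        exact (hd x hx).derivWithin (hu x hx)
      refine ContinuousOn.congr ?_ he
      exact ((continuous_DF.comp (continuous_s r hr)).mul (continuous_sd r)).continuousOn
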